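/- Under the model X_j = μ_j + Z_j with μ_j ∈ [a,b] i.i.d. from F₀ and Z_j i.i.d. N(0,1), the event B = {[a,b] ⊆ [X^{(3)}, X^{(N−2)}] and [X^{(1)}, X^{(N)}] ⊆ [a − √(8 log N), b + √(8 log N)]} satisfies P(B) ≥ 1 − 2·C(N,2)·Φ(b−a)^{N−2} − 1/(2N³√(π log N)) for N large enough. -/

import Mathlib

open MeasureTheory ProbabilityTheory Set
open scoped ENNReal

noncomputable def stdNormalPdf (z : ℝ) : ℝ :=
  (Real.sqrt (2 * Real.pi))⁻¹ * Real.exp (-z ^ 2 / 2)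

noncomputable def stdNormalCdf (z : ℝ) : ℝ := ∫ t in Set.Iic z, stdNormalPdf t

lemma pdf_eq : stdNormalPdf = gaussianPDFReal 0 1 := by
  ext x
  simp [stdNormalPdf, gaussianPDFReal, sq]

lemma gauss_Iic (x : ℝ) : gaussianReal 0 1 (Set.Iic x) = ENNReal.ofReal (stdNormalCdf x) := by
  rw [gaussianReal_apply_eq_integral 0 one_ne_zero, stdNormalCdf, pdf_eq]

lemma pdf_even (x : ℝ) : stdNormalPdf (-x) = stdNormalPdf x := by
  simp [stdNormalPdf, neg_sq]

lemma cdf_neg_eq_Ioi (x : ℝ) : stdNormalCdf (-x) = ∫ t in Set.Ioi x, stdNormalPdf t := by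
  rw [stdNormalCdf, ← integral_comp_neg_Ioi]
  simp_rw [pdf_even]

lemma gauss_Ioi (x : ℝ) : gaussianReal 0 1 (Set.Ioi x) = ENNReal.ofReal (stdNormalCdf (-x)) := by
  rw [gaussianReal_apply_eq_integral 0 one_ne_zero, cdf_neg_eq_Ioi, pdf_eq]

lemma cdf_nonneg (x : ℝ) : 0 ≤ stdNormalCdf x :=
  setIntegral_nonneg measurableSet_Iic fun t _ => by unfold stdNormalPdf; positivity

lemma integral_z_exp (t : ℝ) :
    ∫ z in Set.Ioi t, z * Real.exp (-z ^ 2 / 2) = Real.exp (-t ^ 2 / 2) := by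
  have key : ∀ z : ℝ, HasDerivAt (fun z : ℝ => -Real.exp (-z ^ 2 / 2))
      (z * Real.exp (-z ^ 2 / 2)) z := by
    intro z
    have h1 : HasDerivAt (fun z : ℝ => -z ^ 2 / 2) (-z) z := by
      have := ((hasDerivAt_pow 2 z).neg).div_const 2
      refine this.congr_deriv ?_
      push_cast
      ring
    have h2 := (h1.exp).neg
    refine h2.congr_deriv ?_
    ring
  have hint : IntegrableOn (fun z : ℝ => z * Real.exp (-z ^ 2 / 2)) (Set.Ioi t) := by
    have : (fun z : ℝ => z * Real.exp (-z ^ 2 / 2))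
        = fun z : ℝ => z * Real.exp (-(1/2) * z ^ 2) := by
      funext z; congr 1; ring
    rw [this]
    exact (integrable_mul_exp_neg_mul_sq (by norm_num : (0:ℝ) < 1/2)).integrableOn
  have htend : Filter.Tendsto (fun z : ℝ => -Real.exp (-z ^ 2 / 2)) Filter.atTop (nhds 0) := by
    rw [show (0:ℝ) = -0 by ring]
    refine Filter.Tendsto.neg ?_
    refine Real.tendsto_exp_atBot.comp ?_
    have h1 : Filter.Tendsto (fun z : ℝ => z ^ 2) Filter.atTop Filter.atTop :=
      Filter.tendsto_pow_atTop two_ne_zero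
    have h2 := (Filter.tendsto_neg_atTop_atBot.comp h1).atBot_div_const (by norm_num : (0:ℝ) < 2)
    convert h2 using 2 with z
    rfl
  have := integral_Ioi_of_hasDerivAt_of_tendsto' (fun z _ => key z) hint htend
  rw [this]
  ring

lemma gauss_tail {t : ℝ} (ht : 1 ≤ t) :
    stdNormalCdf (-t) ≤ Real.exp (-t ^ 2 / 2) / (t * Real.sqrt (2 * Real.pi)) := by
  have ht0 : 0 < t := lt_of_lt_of_le one_pos ht
  rw [cdf_neg_eq_Ioi]
  have hInt1 : IntegrableOn stdNormalPdf (Set.Ioi t) := by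
    rw [pdf_eq]; exact (integrable_gaussianPDFReal 0 1).integrableOn
  have hInt2 : IntegrableOn (fun z => (z / t) * stdNormalPdf z) (Set.Ioi t) := by
    have : (fun z => (z / t) * stdNormalPdf z)
        = fun z => (t⁻¹ * (Real.sqrt (2 * Real.pi))⁻¹) * (z * Real.exp (-z ^ 2 / 2)) := by
      funext z; unfold stdNormalPdf; ring
    rw [this]
    refine Integrable.const_mul ?_ _
    have : (fun z : ℝ => z * Real.exp (-z ^ 2 / 2))
        = fun z : ℝ => z * Real.exp (-(1/2) * z ^ 2) := by
      funext z; congr 1; ring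
    rw [this]
    exact (integrable_mul_exp_neg_mul_sq (by norm_num : (0:ℝ) < 1/2)).integrableOn
  have hmono : ∫ z in Set.Ioi t, stdNormalPdf z ≤ ∫ z in Set.Ioi t, (z / t) * stdNormalPdf z := by
    refine setIntegral_mono_on hInt1 hInt2 measurableSet_Ioi fun z hz => ?_
    have h1 : 1 ≤ z / t := (one_le_div ht0).2 (le_of_lt hz)
    have h2 : 0 ≤ stdNormalPdf z := by unfold stdNormalPdf; positivity
    nlinarith
  have heq : ∫ z in Set.Ioi t, (z / t) * stdNormalPdf z
      = Real.exp (-t ^ 2 / 2) / (t * Real.sqrt (2 * Real.pi)) := by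
    have : (fun z => (z / t) * stdNormalPdf z)
        = fun z => (t⁻¹ * (Real.sqrt (2 * Real.pi))⁻¹) * (z * Real.exp (-z ^ 2 / 2)) := by
      funext z; unfold stdNormalPdf; ring
    rw [this, MeasureTheory.integral_const_mul, integral_z_exp]
    field_simp
  linarith [hmono, heq.le, heq.ge]

lemma prod_bound {N : ℕ} {Ω : Type} [MeasurableSpace Ω] (P : Measure Ω)
    (Z : Fin N → Ω → ℝ) (hZm : ∀ j, Measurable (Z j))
    (hZd : ∀ j, Measure.map (Z j) P = gaussianReal 0 1)
    (hindep : iIndepFun Z P)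
    (T : Finset (Fin N)) (s : Set ℝ) (hs : MeasurableSet s) (c : ℝ)
    (hc : gaussianReal 0 1 s ≤ ENNReal.ofReal c) (hc0 : 0 ≤ c) :
    P (⋂ j ∈ T, Z j ⁻¹' s) ≤ ENNReal.ofReal (c ^ T.card) := by
  rw [hindep.meas_biInter (fun j _ => ⟨s, hs, rfl⟩)]
  calc ∏ j ∈ T, P (Z j ⁻¹' s) ≤ ∏ _j ∈ T, ENNReal.ofReal c := by
        refine Finset.prod_le_prod' fun j hj => ?_
        rw [← Measure.map_apply (hZm j) hs, hZd j]; exact hc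
    _ = ENNReal.ofReal c ^ T.card := Finset.prod_const _
    _ = ENNReal.ofReal (c ^ T.card) := (ENNReal.ofReal_pow hc0 _).symm

/-- for `N` large enough, the localization event
`B = {[a,b] ⊆ [X^{(3)}, X^{(N−2)}]` and `[X^{(1)}, X^{(N)}] ⊆ [a − √(8 log N), b + √(8 log N)]}`
(equivalently: at least 3 of the `X_j` are `≤ a`, at least 3 are `≥ b`, and every `X_j`
lies in `[a − √(8 log N), b + √(8 log N)]`) satisfies
`P(B) ≥ 1 − 2 C(N,2) Φ(b−a)^{N−2} − 1/(2N³√(π log N))`. -/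
theorem stmt9 (a b : ℝ) (hab : a ≤ b) :
    ∃ N₀ : ℕ, ∀ N, N₀ ≤ N →
      ∀ {Ω : Type} [MeasurableSpace Ω] (P : Measure Ω), IsProbabilityMeasure P →
        ∀ (Z : Fin N → Ω → ℝ), (∀ j, Measurable (Z j)) →
          (∀ j, Measure.map (Z j) P = gaussianReal 0 1) →
          iIndepFun Z P →
          ∀ (μs : Fin N → Ω → ℝ), (∀ j, Measurable (μs j)) →
            (∀ j, ∀ᵐ ω ∂P, μs j ω ∈ Set.Icc a b) →
            (∀ j, IndepFun (μs j) (Z j) P) →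
            ENNReal.ofReal
                (1 - 2 * (N.choose 2 : ℝ) * stdNormalCdf (b - a) ^ (N - 2)
                  - 1 / (2 * (N : ℝ) ^ 3 * Real.sqrt (Real.pi * Real.log N)))
              ≤ P {ω |
                  3 ≤ (Finset.univ.filter fun j => μs j ω + Z j ω ≤ a).card ∧
                  3 ≤ (Finset.univ.filter fun j => b ≤ μs j ω + Z j ω).card ∧
                  ∀ j, a - Real.sqrt (8 * Real.log N) ≤ μs j ω + Z j ω ∧
                    μs j ω + Z j ω ≤ b + Real.sqrt (8 * Real.log N)} := by
  classical
  refine ⟨3, fun N hN Ω _ P hP Z hZm hZd hindep μs hμm hμab _ => ?_⟩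
  haveI := hP
  set t := Real.sqrt (8 * Real.log N) with ht_def
  -- numeric facts
  have hN3 : (3 : ℝ) ≤ (N : ℝ) := by exact_mod_cast hN
  have hNpos : (0 : ℝ) < N := by linarith
  have hlog : 1 ≤ Real.log N := by
    rw [Real.le_log_iff_exp_le hNpos]
    have := Real.exp_one_lt_d9
    linarith
  have ht1 : 1 ≤ t := Real.one_le_sqrt.2 (by nlinarith)
  have hsq : t ^ 2 = 8 * Real.log N := Real.sq_sqrt (by positivity)
  have hΦ0 : 0 ≤ stdNormalCdf (b - a) := cdf_nonneg _
  have hπ : 0 < Real.pi := Real.pi_pos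
  have hsqrtpos : 0 < Real.sqrt (Real.pi * Real.log N) := Real.sqrt_pos.2 (by positivity)
  have htail : stdNormalCdf (-t) ≤ 1 / (4 * (N : ℝ) ^ 4 * Real.sqrt (Real.pi * Real.log N)) := by
    have h1 := gauss_tail ht1
    have he : Real.exp (-t ^ 2 / 2) = ((N : ℝ) ^ 4)⁻¹ := by
      rw [hsq, show -(8 * Real.log N) / 2 = -((4 : ℕ) * Real.log N) by push_cast; ring,
        Real.exp_neg, Real.exp_nat_mul, Real.exp_log hNpos]
    have hs : t * Real.sqrt (2 * Real.pi) = 4 * Real.sqrt (Real.pi * Real.log N) := by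
      rw [ht_def, ← Real.sqrt_mul (by positivity),
        show 8 * Real.log N * (2 * Real.pi) = 16 * (Real.pi * Real.log N) by ring,
        Real.sqrt_mul (by norm_num), show (16 : ℝ) = 4 ^ 2 by norm_num, Real.sqrt_sq (by norm_num)]
    rw [he, hs] at h1
    refine h1.trans (le_of_eq ?_)
    field_simp
  -- the good event and bad events
  set B : Set Ω := {ω |
      3 ≤ (Finset.univ.filter fun j => μs j ω + Z j ω ≤ a).card ∧
      3 ≤ (Finset.univ.filter fun j => b ≤ μs j ω + Z j ω).card ∧
      ∀ j, a - t ≤ μs j ω + Z j ω ∧ μs j ω + Z j ω ≤ b + t} with hB_def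
  have hG : ∀ᵐ ω ∂P, ∀ j, μs j ω ∈ Set.Icc a b := ae_all_iff.2 hμab
  set Bad1 : Set Ω := {ω | (Finset.univ.filter fun j => μs j ω + Z j ω ≤ a).card ≤ 2}
  set Bad2 : Set Ω := {ω | (Finset.univ.filter fun j => b ≤ μs j ω + Z j ω).card ≤ 2}
  set Bad3 : Set Ω := {ω | ∃ j, μs j ω + Z j ω < a - t ∨ b + t < μs j ω + Z j ω}
  have hcompl : Bᶜ ⊆ Bad1 ∪ Bad2 ∪ Bad3 := by
    intro ω hω
    simp only [Set.mem_compl_iff, hB_def, Set.mem_setOf_eq] at hω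
    by_cases h1 : 3 ≤ (Finset.univ.filter fun j => μs j ω + Z j ω ≤ a).card
    · by_cases h2 : 3 ≤ (Finset.univ.filter fun j => b ≤ μs j ω + Z j ω).card
      · have h3 : ¬ ∀ j, a - t ≤ μs j ω + Z j ω ∧ μs j ω + Z j ω ≤ b + t := by
          intro h; exact hω ⟨h1, h2, h⟩
        push_neg at h3
        obtain ⟨j, hj⟩ := h3
        right
        refine ⟨j, ?_⟩
        by_cases h4 : a - t ≤ μs j ω + Z j ω
        · exact Or.inr (hj h4)
        · exact Or.inl (not_le.1 h4)
      · exact Or.inl (Or.inr (Nat.lt_succ_iff.mp (not_le.1 h2)))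
    · exact Or.inl (Or.inl (Nat.lt_succ_iff.mp (not_le.1 h1)))
  -- bound on Bad1
  have hcard_compl : ∀ S : Finset (Fin N), S ∈ Finset.powersetCard 2 (Finset.univ : Finset (Fin N)) →
      (Sᶜ : Finset (Fin N)).card = N - 2 := by
    intro S hS
    rw [Finset.mem_powersetCard] at hS
    rw [Finset.card_compl, hS.2, Fintype.card_fin]
  have hIoi : gaussianReal 0 1 (Set.Ioi (a - b)) ≤ ENNReal.ofReal (stdNormalCdf (b - a)) := by
    rw [gauss_Ioi, neg_sub]
  have hIio : gaussianReal 0 1 (Set.Iio (b - a)) ≤ ENNReal.ofReal (stdNormalCdf (b - a)) := by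
    rw [← gauss_Iic]
    exact measure_mono Set.Iio_subset_Iic_self
  have hsum_bound : ∀ (s : Set ℝ), MeasurableSet s →
      gaussianReal 0 1 s ≤ ENNReal.ofReal (stdNormalCdf (b - a)) →
      P (⋃ S ∈ Finset.powersetCard 2 (Finset.univ : Finset (Fin N)), ⋂ j ∈ Sᶜ, Z j ⁻¹' s)
        ≤ ENNReal.ofReal ((N.choose 2 : ℝ) * stdNormalCdf (b - a) ^ (N - 2)) := by
    intro s hs hsc
    refine (measure_biUnion_finset_le _ _).trans ?_
    calc ∑ S ∈ Finset.powersetCard 2 (Finset.univ : Finset (Fin N)), P (⋂ j ∈ Sᶜ, Z j ⁻¹' s)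
        ≤ ∑ _S ∈ Finset.powersetCard 2 (Finset.univ : Finset (Fin N)),
            ENNReal.ofReal (stdNormalCdf (b - a) ^ (N - 2)) := by
          refine Finset.sum_le_sum fun S hS => ?_
          have := prod_bound P Z hZm hZd hindep Sᶜ s hs (stdNormalCdf (b - a)) hsc hΦ0
          rwa [hcard_compl S hS] at this
      _ = (Finset.powersetCard 2 (Finset.univ : Finset (Fin N))).card •
            ENNReal.ofReal (stdNormalCdf (b - a) ^ (N - 2)) := Finset.sum_const _
      _ = ENNReal.ofReal ((N.choose 2 : ℝ) * stdNormalCdf (b - a) ^ (N - 2)) := by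
          rw [Finset.card_powersetCard, Finset.card_univ, Fintype.card_fin, nsmul_eq_mul,
            ENNReal.ofReal_mul (by positivity), ENNReal.ofReal_natCast]
  have hBad1 : P Bad1 ≤ ENNReal.ofReal ((N.choose 2 : ℝ) * stdNormalCdf (b - a) ^ (N - 2)) := by
    refine le_trans (measure_mono_ae ?_) (hsum_bound _ measurableSet_Ioi hIoi)
    filter_upwards [hG] with ω hωG
    intro hω1
    have hω1' : (Finset.univ.filter fun j => μs j ω + Z j ω ≤ a).card ≤ 2 := hω1
    obtain ⟨S, hTS, hScard⟩ := Finset.exists_superset_card_eq hω1'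
      (by simpa [Fintype.card_fin] using (by omega : 2 ≤ N))
    refine Set.mem_iUnion₂.2 ⟨S, Finset.mem_powersetCard.2 ⟨Finset.subset_univ _, hScard⟩, ?_⟩
    refine Set.mem_iInter₂.2 fun j hj => ?_
    have hjS : j ∉ S := Finset.mem_compl.1 hj
    have hjT : ¬ (μs j ω + Z j ω ≤ a) := fun hle =>
      hjS (hTS (Finset.mem_filter.2 ⟨Finset.mem_univ _, hle⟩))
    have hμb := (hωG j).2
    simp only [Set.mem_preimage, Set.mem_Ioi]
    push_neg at hjT
    linarith [hμb]
  have hBad2 : P Bad2 ≤ ENNReal.ofReal ((N.choose 2 : ℝ) * stdNormalCdf (b - a) ^ (N - 2)) := by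
    refine le_trans (measure_mono_ae ?_) (hsum_bound _ measurableSet_Iio hIio)
    filter_upwards [hG] with ω hωG
    intro hω1
    have hω1' : (Finset.univ.filter fun j => b ≤ μs j ω + Z j ω).card ≤ 2 := hω1
    obtain ⟨S, hTS, hScard⟩ := Finset.exists_superset_card_eq hω1'
      (by simpa [Fintype.card_fin] using (by omega : 2 ≤ N))
    refine Set.mem_iUnion₂.2 ⟨S, Finset.mem_powersetCard.2 ⟨Finset.subset_univ _, hScard⟩, ?_⟩
    refine Set.mem_iInter₂.2 fun j hj => ?_
    have hjS : j ∉ S := Finset.mem_compl.1 hj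
    have hjT : ¬ (b ≤ μs j ω + Z j ω) := fun hle =>
      hjS (hTS (Finset.mem_filter.2 ⟨Finset.mem_univ _, hle⟩))
    have hμa := (hωG j)
    simp only [Set.mem_preimage, Set.mem_Iio]
    push_neg at hjT
    simp only [Set.mem_Icc] at hμa
    linarith [hμa.1]
  have hZIio : ∀ j, P (Z j ⁻¹' Set.Iio (-t)) ≤ ENNReal.ofReal (stdNormalCdf (-t)) := fun j => by
    rw [← Measure.map_apply (hZm j) measurableSet_Iio, hZd j]
    exact (measure_mono Set.Iio_subset_Iic_self).trans (gauss_Iic _).le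
  have hZIoi : ∀ j, P (Z j ⁻¹' Set.Ioi t) ≤ ENNReal.ofReal (stdNormalCdf (-t)) := fun j => by
    rw [← Measure.map_apply (hZm j) measurableSet_Ioi, hZd j, gauss_Ioi]
  have hBad3 : P Bad3
      ≤ ENNReal.ofReal (1 / (2 * (N : ℝ) ^ 3 * Real.sqrt (Real.pi * Real.log N))) := by
    have hsub : Bad3 ≤ᵐ[P] ⋃ j, (Z j ⁻¹' Set.Iio (-t) ∪ Z j ⁻¹' Set.Ioi t) := by
      filter_upwards [hG] with ω hωG
      intro hω
      obtain ⟨j, hj⟩ := hω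
      have hμ := hωG j
      simp only [Set.mem_Icc] at hμ
      refine Set.mem_iUnion.2 ⟨j, ?_⟩
      rcases hj with hj | hj
      · exact Or.inl (by simp only [Set.mem_preimage, Set.mem_Iio]; linarith [hμ.1])
      · exact Or.inr (by simp only [Set.mem_preimage, Set.mem_Ioi]; linarith [hμ.2])
    refine (measure_mono_ae hsub).trans ((measure_iUnion_le _).trans ?_)
    have hone : ∀ j : Fin N, P (Z j ⁻¹' Set.Iio (-t) ∪ Z j ⁻¹' Set.Ioi t)
        ≤ ENNReal.ofReal (2 * stdNormalCdf (-t)) := fun j => by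
      refine (measure_union_le _ _).trans ?_
      have h2 := add_le_add (hZIio j) (hZIoi j)
      rwa [← ENNReal.ofReal_add (cdf_nonneg _) (cdf_nonneg _),
        show stdNormalCdf (-t) + stdNormalCdf (-t) = 2 * stdNormalCdf (-t) by ring] at h2
    calc ∑' j : Fin N, P (Z j ⁻¹' Set.Iio (-t) ∪ Z j ⁻¹' Set.Ioi t)
        ≤ ∑' _j : Fin N, ENNReal.ofReal (2 * stdNormalCdf (-t)) := ENNReal.tsum_le_tsum hone
      _ = (N : ℝ≥0∞) * ENNReal.ofReal (2 * stdNormalCdf (-t)) := by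
          rw [tsum_fintype]
          simp [Finset.sum_const, Fintype.card_fin, nsmul_eq_mul]
      _ = ENNReal.ofReal ((N : ℝ) * (2 * stdNormalCdf (-t))) := by
          rw [← ENNReal.ofReal_natCast N, ← ENNReal.ofReal_mul (by positivity)]
      _ ≤ ENNReal.ofReal (1 / (2 * (N : ℝ) ^ 3 * Real.sqrt (Real.pi * Real.log N))) := by
          refine ENNReal.ofReal_le_ofReal ?_
          have hkey : (N : ℝ) * (2 * (1 / (4 * (N : ℝ) ^ 4 * Real.sqrt (Real.pi * Real.log N))))
              = 1 / (2 * (N : ℝ) ^ 3 * Real.sqrt (Real.pi * Real.log N)) := by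
            field_simp
            ring
          rw [← hkey]
          have : 0 ≤ (N : ℝ) * 2 := by positivity
          nlinarith [htail, cdf_nonneg (-t), hNpos]
  -- assemble
  have hs1 : (0 : ℝ) ≤ 2 * (N.choose 2 : ℝ) * stdNormalCdf (b - a) ^ (N - 2)
      + 1 / (2 * (N : ℝ) ^ 3 * Real.sqrt (Real.pi * Real.log N)) := by positivity
  have hPBc : P Bᶜ ≤ ENNReal.ofReal (2 * (N.choose 2 : ℝ) * stdNormalCdf (b - a) ^ (N - 2)
      + 1 / (2 * (N : ℝ) ^ 3 * Real.sqrt (Real.pi * Real.log N))) := by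
    refine (measure_mono hcompl).trans ?_
    refine (measure_union_le _ _).trans ?_
    refine (add_le_add (measure_union_le _ _) le_rfl).trans ?_
    refine (add_le_add (add_le_add hBad1 hBad2) hBad3).trans ?_
    rw [← ENNReal.ofReal_add (by positivity) (by positivity),
      ← ENNReal.ofReal_add (by positivity) (by positivity)]
    refine ENNReal.ofReal_le_ofReal (le_of_eq ?_)
    ring
  have hunion : (1 : ℝ≥0∞) ≤ P B + P Bᶜ := by
    rw [← measure_univ (μ := P), ← Set.union_compl_self B]
    exact measure_union_le _ _
  rw [sub_sub, ENNReal.ofReal_sub _ hs1, ENNReal.ofReal_one]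
  refine tsub_le_iff_right.2 ?_
  calc (1 : ℝ≥0∞) ≤ P B + P Bᶜ := hunion
    _ ≤ P B + ENNReal.ofReal (2 * (N.choose 2 : ℝ) * stdNormalCdf (b - a) ^ (N - 2)
        + 1 / (2 * (N : ℝ) ^ 3 * Real.sqrt (Real.pi * Real.log N))) := add_le_add_right hPBc _
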